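/- Let (K, Γ, k; v) be a valued field whose value group Γ is dense and regular but not divisible. Then K is not extremal: there exists a polynomial F(x,y) over K such that the set {v(F(a,b)) : a, b ∈ O_v} has no maximal element. -/

import Mathlib

/-- An ordered abelian group is *regular* if for each positive integer `n`, every open
interval containing at least `n` elements contains an `n`-divisible element. -/
def IsRegularGroup (Γ : Type*) [AddCommGroup Γ] [LinearOrder Γ] [IsOrderedAddMonoid Γ] : Prop :=
  ∀ n : ℕ, 0 < n → ∀ α β : Γ, (∃ s : Finset Γ, s.card = n ∧ ↑s ⊆ Set.Ioo α β) →
    ∃ δ : Γ, n • δ ∈ Set.Ioo α β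

/-- A valued field whose value group is dense and regular but not divisible is not
extremal: some polynomial in two variables has no maximal value on the valuation ring. -/
theorem not_extremal_of_dense_regular_not_divisible {K Γ : Type*} [Field K]
    [AddCommGroup Γ] [LinearOrder Γ] [IsOrderedAddMonoid Γ] (v : AddValuation K (WithTop Γ))
    (hsurj : ∀ γ : Γ, ∃ x : K, v x = (γ : WithTop Γ))
    (hreg : IsRegularGroup Γ) (hdense : DenselyOrdered Γ)
    (hndiv : ∃ (γ : Γ) (n : ℕ), 0 < n ∧ ¬∃ δ : Γ, n • δ = γ) :
    ∃ F : MvPolynomial (Fin 2) K,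
      ¬∃ a b : K, 0 ≤ v a ∧ 0 ≤ v b ∧
        ∀ c d : K, 0 ≤ v c → 0 ≤ v d →
          v (MvPolynomial.eval ![c, d] F) ≤ v (MvPolynomial.eval ![a, b] F) := by
  classical
  obtain ⟨γ₀, n, hn, hγ₀⟩ := hndiv
  -- WLOG the non-divisible element is positive
  obtain ⟨γ, hγpos, hγ⟩ : ∃ γ : Γ, 0 < γ ∧ ¬∃ δ : Γ, n • δ = γ := by
    rcases lt_trichotomy γ₀ 0 with h | h | h
    · exact ⟨-γ₀, neg_pos.mpr h,
        fun ⟨δ, hδ⟩ => hγ₀ ⟨-δ, by rw [smul_neg, hδ, neg_neg]⟩⟩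
    · exact absurd ⟨0, by rw [smul_zero, h]⟩ hγ₀
    · exact ⟨γ₀, h, hγ₀⟩
  have hkey : ∀ x y : Γ, n • x ≠ γ + n • y := by
    intro x y h
    exact hγ ⟨x - y, by rw [smul_sub, h]; abel⟩
  -- derived non-divisibility facts
  have hkey4 : ∀ x y : Γ, (4 * n) • x ≠ γ + (4 * n) • y := by
    intro x y h
    refine hkey (4 • x) (4 • y) ?_
    have e1 : n • (4 • x) = (4 * n) • x := by module
    have e2 : γ + n • (4 • y) = γ + (4 * n) • y := by module
    rw [e1, e2, h]
  have half : ∀ x y : Γ, (2:ℕ) • x = (2:ℕ) • y → x = y := by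
    intro x y h
    exact le_antisymm (le_of_nsmul_le_nsmul_right two_ne_zero h.le)
      (le_of_nsmul_le_nsmul_right two_ne_zero h.ge)
  have hkey13 : ∀ x y : Γ, (4 * n) • x ≠ (2:ℕ) • γ + (4 * n) • y := by
    intro x y h
    refine hkey (2 • x) (2 • y) (half _ _ ?_)
    have e1 : (2:ℕ) • (n • (2 • x)) = (4 * n) • x := by module
    have e2 : (2:ℕ) • (γ + n • (2 • y)) = (2:ℕ) • γ + (4 * n) • y := by module
    rw [e1, e2, h]
  obtain ⟨ε, hε⟩ := hsurj γ
  have hε0 : ε ≠ 0 := by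
    intro h
    rw [h, v.map_zero] at hε
    exact (WithTop.coe_ne_top (a := γ)) hε.symm
  have hvε2 : v (ε ^ 2) = ((2:ℕ) • γ : Γ) := by
    rw [v.map_pow, hε]; norm_cast
  -- the polynomial
  refine ⟨MvPolynomial.X 0 ^ (4 * n)
      + MvPolynomial.C ε * (MvPolynomial.X 0 * MvPolynomial.X 1 - MvPolynomial.C (ε ^ 2)) ^ n
      + MvPolynomial.C (ε ^ 2) * MvPolynomial.X 1 ^ (4 * n), ?_⟩
  rintro ⟨a, b, ha, hb, hmax⟩
  have heval : ∀ x y : K,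
      MvPolynomial.eval ![x, y] (MvPolynomial.X 0 ^ (4 * n)
        + MvPolynomial.C ε * (MvPolynomial.X 0 * MvPolynomial.X 1
          - MvPolynomial.C (ε ^ 2)) ^ n
        + MvPolynomial.C (ε ^ 2) * MvPolynomial.X 1 ^ (4 * n))
      = x ^ (4 * n) + ε * (x * y - ε ^ 2) ^ n + ε ^ 2 * y ^ (4 * n) := by
    intro x y
    simp [Matrix.cons_val_zero, Matrix.cons_val_one, Matrix.head_cons]
  have hn4 : 4 * n ≠ 0 := by omega
  -- valuation of a sum of three elements with pairwise distinct valuations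
  have vmin3 : ∀ x y z : K, v x ≠ v y → v x ≠ v z → v y ≠ v z →
      v (x + y + z) = min (v x) (min (v y) (v z)) := by
    intro x y z hxy hxz hyz
    have h1 : v (y + z) = min (v y) (v z) := v.map_add_of_distinct_val hyz
    have h2 : v x ≠ v (y + z) := by
      rw [h1]
      rcases min_cases (v y) (v z) with ⟨h, -⟩ | ⟨h, -⟩ <;> rw [h] <;> assumption
    rw [add_assoc, v.map_add_of_distinct_val h2, h1]
  -- the strict upper bound on the value at (a, b)
  have hbound : ∃ g : Γ, v (a ^ (4 * n) + ε * (a * b - ε ^ 2) ^ n + ε ^ 2 * b ^ (4 * n))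
      = (g : WithTop Γ) ∧ g < (4 * n + 1) • γ := by
    have h2n1 : ((2 * n + 1) • γ : Γ) < (4 * n + 1) • γ :=
      (nsmul_lt_nsmul_iff_left hγpos).mpr (by omega)
    rcases eq_or_ne a 0 with rfl | ha0
    · -- a = 0
      have hw : (0 : K) * b - ε ^ 2 = -(ε ^ 2) := by ring
      have hQ : v (ε * ((0:K) * b - ε ^ 2) ^ n) = (((2 * n + 1) • γ : Γ) : WithTop Γ) := by
        have e : (γ + n • ((2:ℕ) • γ) : Γ) = (2 * n + 1) • γ := by module
        rw [hw, v.map_mul, v.map_pow, v.map_neg, hvε2, hε, ← WithTop.coe_nsmul,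
          ← WithTop.coe_add, e]
      rcases eq_or_ne b 0 with rfl | hb0
      · refine ⟨(2 * n + 1) • γ, ?_, h2n1⟩
        rw [zero_pow hn4, zero_add, mul_zero (ε ^ 2), add_zero]
        exact hQ
      · obtain ⟨β, hβ⟩ : ∃ β : Γ, v b = (β : WithTop Γ) := by
          obtain ⟨β, hβ⟩ := WithTop.ne_top_iff_exists.mp (v.ne_top_iff.mpr hb0)
          exact ⟨β, hβ.symm⟩
        have hR : v (ε ^ 2 * b ^ (4 * n)) = (((2:ℕ) • γ + (4 * n) • β : Γ) : WithTop Γ) := by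
          rw [v.map_mul, hvε2, v.map_pow, hβ, ← WithTop.coe_nsmul, ← WithTop.coe_add]
        have hdist : v (ε * ((0:K) * b - ε ^ 2) ^ n) ≠ v (ε ^ 2 * b ^ (4 * n)) := by
          rw [hQ, hR]
          intro h
          have h' : ((2 * n + 1) • γ : Γ) = (2:ℕ) • γ + (4 * n) • β := by exact_mod_cast h
          refine hkey (2 • γ) (4 • β) ?_
          have e1 : n • ((2:ℕ) • γ) = (2 * n + 1) • γ - γ := by module
          have e2 : γ + n • ((4:ℕ) • β) = γ + (4 * n) • β := by module
          rw [e1, e2, h']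
          abel
        refine ⟨min ((2 * n + 1) • γ) ((2:ℕ) • γ + (4 * n) • β), ?_,
          lt_of_le_of_lt (min_le_left _ _) h2n1⟩
        rw [zero_pow hn4, zero_add, v.map_add_of_distinct_val hdist, hQ, hR]
        exact (WithTop.coe_min _ _).symm
    rcases eq_or_ne b 0 with rfl | hb0
    · -- b = 0, a ≠ 0
      obtain ⟨α, hα⟩ : ∃ α : Γ, v a = (α : WithTop Γ) := by
        obtain ⟨α, hα⟩ := WithTop.ne_top_iff_exists.mp (v.ne_top_iff.mpr ha0)
        exact ⟨α, hα.symm⟩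
      have hw : a * (0 : K) - ε ^ 2 = -(ε ^ 2) := by ring
      have hQ : v (ε * (a * (0:K) - ε ^ 2) ^ n) = (((2 * n + 1) • γ : Γ) : WithTop Γ) := by
        have e : (γ + n • ((2:ℕ) • γ) : Γ) = (2 * n + 1) • γ := by module
        rw [hw, v.map_mul, v.map_pow, v.map_neg, hvε2, hε, ← WithTop.coe_nsmul,
          ← WithTop.coe_add, e]
      have hP : v (a ^ (4 * n)) = (((4 * n) • α : Γ) : WithTop Γ) := by
        rw [v.map_pow, hα, ← WithTop.coe_nsmul]
      have hdist : v (a ^ (4 * n)) ≠ v (ε * (a * (0:K) - ε ^ 2) ^ n) := by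
        rw [hP, hQ]
        intro h
        have h' : ((4 * n) • α : Γ) = (2 * n + 1) • γ := by exact_mod_cast h
        refine hkey (4 • α) (2 • γ) ?_
        have e1 : n • ((4:ℕ) • α) = (4 * n) • α := by module
        have e2 : γ + n • ((2:ℕ) • γ) = (2 * n + 1) • γ := by module
        rw [e1, e2, h']
      refine ⟨min ((4 * n) • α) ((2 * n + 1) • γ), ?_,
        lt_of_le_of_lt (min_le_right _ _) h2n1⟩
      rw [zero_pow hn4, mul_zero (ε ^ 2), add_zero, v.map_add_of_distinct_val hdist, hP, hQ]
      exact (WithTop.coe_min _ _).symm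
    · -- a ≠ 0, b ≠ 0
      obtain ⟨α, hα⟩ : ∃ α : Γ, v a = (α : WithTop Γ) := by
        obtain ⟨α, hα⟩ := WithTop.ne_top_iff_exists.mp (v.ne_top_iff.mpr ha0)
        exact ⟨α, hα.symm⟩
      obtain ⟨β, hβ⟩ : ∃ β : Γ, v b = (β : WithTop Γ) := by
        obtain ⟨β, hβ⟩ := WithTop.ne_top_iff_exists.mp (v.ne_top_iff.mpr hb0)
        exact ⟨β, hβ.symm⟩
      have hP : v (a ^ (4 * n)) = (((4 * n) • α : Γ) : WithTop Γ) := by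
        rw [v.map_pow, hα, ← WithTop.coe_nsmul]
      have hR : v (ε ^ 2 * b ^ (4 * n)) = (((2:ℕ) • γ + (4 * n) • β : Γ) : WithTop Γ) := by
        rw [v.map_mul, hvε2, v.map_pow, hβ, ← WithTop.coe_nsmul, ← WithTop.coe_add]
      have hPR : ((4 * n) • α : Γ) ≠ (2:ℕ) • γ + (4 * n) • β := hkey13 α β
      -- the key inequality: it cannot happen that both extreme terms have huge value
      have hcore : ∀ g : Γ, ((4 * n + 1) • γ : Γ) ≤ (4 * n) • α →
          ((4 * n + 1) • γ : Γ) ≤ (2:ℕ) • γ + (4 * n) • β → (2:ℕ) • γ < α + β := by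
        intro g h1 h2
        have h1' : ((4 * n + 1) • γ : Γ) < (4 * n) • α := by
          refine lt_of_le_of_ne h1 ?_
          intro h
          refine hkey4 α γ ?_
          have e : γ + (4 * n) • γ = (4 * n + 1) • γ := by module
          rw [e, ← h]
        have hsum : ((4 * n) • ((2:ℕ) • γ) : Γ) + (2:ℕ) • γ < (4 * n) • (α + β) + (2:ℕ) • γ := by
          calc ((4 * n) • ((2:ℕ) • γ) : Γ) + (2:ℕ) • γ
              = (4 * n + 1) • γ + (4 * n + 1) • γ := by module
            _ < (4 * n) • α + ((2:ℕ) • γ + (4 * n) • β) := add_lt_add_of_lt_of_le h1' h2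
            _ = (4 * n) • (α + β) + (2:ℕ) • γ := by module
        have := lt_of_add_lt_add_right hsum
        exact lt_of_nsmul_lt_nsmul_right _ this
      rcases eq_or_ne (a * b - ε ^ 2) 0 with hw0 | hw0
      · -- middle term vanishes
        have hab : v (a * b) = ((α + β : Γ) : WithTop Γ) := by
          rw [v.map_mul, hα, hβ, ← WithTop.coe_add]
        have habe : α + β = (2:ℕ) • γ := by
          have : a * b = ε ^ 2 := by rwa [sub_eq_zero] at hw0
          rw [this, hvε2] at hab
          exact_mod_cast hab.symm
        have hdist : v (a ^ (4 * n)) ≠ v (ε ^ 2 * b ^ (4 * n)) := by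
          rw [hP, hR]; exact_mod_cast fun h => hPR (by exact_mod_cast h)
        refine ⟨min ((4 * n) • α) ((2:ℕ) • γ + (4 * n) • β), ?_, ?_⟩
        · rw [hw0, zero_pow hn.ne', mul_zero, add_zero, v.map_add_of_distinct_val hdist,
            hP, hR]
          exact (WithTop.coe_min _ _).symm
        · by_contra hcon
          push_neg at hcon
          have h1 : ((4 * n + 1) • γ : Γ) ≤ (4 * n) • α :=
            le_trans hcon (min_le_left _ _)
          have h2 : ((4 * n + 1) • γ : Γ) ≤ (2:ℕ) • γ + (4 * n) • β :=
            le_trans hcon (min_le_right _ _)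
          have := hcore γ h1 h2
          rw [habe] at this
          exact lt_irrefl _ this
      · -- middle term does not vanish
        obtain ⟨m, hm⟩ : ∃ m : Γ, v (a * b - ε ^ 2) = (m : WithTop Γ) := by
          obtain ⟨m, hm⟩ := WithTop.ne_top_iff_exists.mp (v.ne_top_iff.mpr hw0)
          exact ⟨m, hm.symm⟩
        have hQ : v (ε * (a * b - ε ^ 2) ^ n) = ((γ + n • m : Γ) : WithTop Γ) := by
          rw [v.map_mul, v.map_pow, hε, hm, ← WithTop.coe_nsmul, ← WithTop.coe_add]
        have hd12 : ((4 * n) • α : Γ) ≠ γ + n • m := by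
          intro h
          refine hkey (4 • α) m ?_
          have e1 : n • ((4:ℕ) • α) = (4 * n) • α := by module
          rw [e1, h]
        have hd23 : (γ + n • m : Γ) ≠ (2:ℕ) • γ + (4 * n) • β := by
          intro h
          refine hkey m (4 • β) ?_
          have e2 : γ + n • ((4:ℕ) • β) = γ + (4 * n) • β := by module
          rw [e2]
          have : (n • m : Γ) = γ + (4 * n) • β := by
            have e3 : ((2:ℕ) • γ + (4 * n) • β : Γ) - γ = γ + (4 * n) • β := by module
            rw [← e3, ← h]; abel
          rw [this]
        have hmin : v (a ^ (4 * n) + ε * (a * b - ε ^ 2) ^ n + ε ^ 2 * b ^ (4 * n))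
            = ((min ((4 * n) • α) (min (γ + n • m) ((2:ℕ) • γ + (4 * n) • β)) : Γ)
              : WithTop Γ) := by
          rw [vmin3 _ _ _ (by rw [hP, hQ]; exact_mod_cast fun h => hd12 (by exact_mod_cast h))
            (by rw [hP, hR]; exact_mod_cast fun h => hPR (by exact_mod_cast h))
            (by rw [hQ, hR]; exact_mod_cast fun h => hd23 (by exact_mod_cast h)), hP, hQ, hR]
          rw [WithTop.coe_min, WithTop.coe_min]
        refine ⟨_, hmin, ?_⟩
        by_contra hcon
        push_neg at hcon
        have h1 : ((4 * n + 1) • γ : Γ) ≤ (4 * n) • α :=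
          le_trans hcon (min_le_left _ _)
        have h2' : ((4 * n + 1) • γ : Γ) ≤ min (γ + n • m) ((2:ℕ) • γ + (4 * n) • β) :=
          le_trans hcon (min_le_right _ _)
        have h2 : ((4 * n + 1) • γ : Γ) ≤ (2:ℕ) • γ + (4 * n) • β :=
          le_trans h2' (min_le_right _ _)
        have hab2 : ((2:ℕ) • γ : Γ) < α + β := hcore γ h1 h2
        -- then v (a*b - ε²) = v (ε²) = 2γ
        have hvab : v (ε ^ 2) < v (a * b) := by
          rw [hvε2, v.map_mul, hα, hβ, ← WithTop.coe_add]
          exact_mod_cast hab2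
        have hm2 : v (a * b - ε ^ 2) = (((2:ℕ) • γ : Γ) : WithTop Γ) := by
          rw [v.map_sub_eq_of_lt_right hvab, hvε2]
        have hmeq : m = (2:ℕ) • γ := by
          rw [hm] at hm2; exact_mod_cast hm2
        have hT2 : (γ + n • m : Γ) = (2 * n + 1) • γ := by
          rw [hmeq]; module
        have h3 : ((4 * n + 1) • γ : Γ) ≤ (2 * n + 1) • γ := by
          refine le_trans h2' ?_
          rw [hT2] at *
          exact min_le_left _ _
        have h4 : ((2 * n + 1) • γ : Γ) < (4 * n + 1) • γ :=
          (nsmul_lt_nsmul_iff_left hγpos).mpr (by omega)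
        exact absurd (lt_of_lt_of_le h4 h3) (lt_irrefl _)
  obtain ⟨g, hg, hglt⟩ := hbound
  -- choose δ with (4n)•δ in a suitable interval via regularity and density
  have hlo : max g 0 < min ((8 * n + 2) • γ - g) ((8 * n) • γ) := by
    have hg8 : g < (8 * n) • γ :=
      lt_of_lt_of_le hglt ((nsmul_le_nsmul_iff_left hγpos).mpr (by omega))
    have h0a : (0 : Γ) < (8 * n + 2) • γ - g := by
      rw [sub_pos]
      exact lt_of_lt_of_le hglt ((nsmul_le_nsmul_iff_left hγpos).mpr (by omega))
    have h0b : (0 : Γ) < (8 * n) • γ := nsmul_pos hγpos (by omega)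
    have hga : g < (8 * n + 2) • γ - g := by
      rw [lt_sub_iff_add_lt]
      calc g + g < (4 * n + 1) • γ + (4 * n + 1) • γ := add_lt_add hglt hglt
        _ = (8 * n + 2) • γ := by module
    exact max_lt (lt_min hga hg8) (lt_min h0a h0b)
  obtain ⟨t, hts, htc⟩ := (Set.Ioo_infinite hlo).exists_subset_card_eq (4 * n)
  obtain ⟨δ, hδ⟩ := hreg (4 * n) (by omega) _ _ ⟨t, htc, hts⟩
  obtain ⟨hδlo, hδhi⟩ := hδ
  have hδg : g < (4 * n) • δ := lt_of_le_of_lt (le_max_left _ _) hδlo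
  have hδ0 : (0 : Γ) < δ := by
    by_contra h
    push_neg at h
    have : ((4 * n) • δ : Γ) ≤ 0 := nsmul_nonpos h _
    exact absurd (lt_of_le_of_lt (le_max_right _ _) hδlo) (not_lt.mpr this)
  have hδ2γ : δ < (2:ℕ) • γ := by
    have h8 : ((4 * n) • δ : Γ) < (4 * n) • ((2:ℕ) • γ) := by
      have e : ((4 * n) • ((2:ℕ) • γ) : Γ) = (8 * n) • γ := by module
      rw [e]
      exact lt_of_lt_of_le hδhi (min_le_right _ _)
    exact lt_of_nsmul_lt_nsmul_right _ h8
  have hδup : ((4 * n) • δ : Γ) < (8 * n + 2) • γ - g :=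
    lt_of_lt_of_le hδhi (min_le_left _ _)
  -- construct the new point (c, d)
  obtain ⟨c, hc⟩ := hsurj δ
  have hc0 : c ≠ 0 := by
    intro h
    rw [h, v.map_zero] at hc
    exact (WithTop.coe_ne_top (a := δ)) hc.symm
  set d : K := ε ^ 2 * c⁻¹ with hd
  have hcd : c * d = ε ^ 2 := by
    rw [hd]; field_simp
  have hd0 : d ≠ 0 := by
    intro h
    rw [h, mul_zero] at hcd
    exact pow_ne_zero 2 hε0 hcd.symm
  obtain ⟨β, hβ⟩ : ∃ β : Γ, v d = (β : WithTop Γ) := by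
    obtain ⟨β, hβ⟩ := WithTop.ne_top_iff_exists.mp (v.ne_top_iff.mpr hd0)
    exact ⟨β, hβ.symm⟩
  have hβval : β = (2:ℕ) • γ - δ := by
    have h1 : v c + v d = v (ε ^ 2) := by rw [← v.map_mul, hcd]
    rw [hc, hβ, hvε2, ← WithTop.coe_add] at h1
    have h2 : δ + β = (2:ℕ) • γ := by exact_mod_cast h1
    rw [← h2]; abel
  -- (c, d) lies in the valuation ring
  have hvc : (0 : WithTop Γ) ≤ v c := by
    rw [hc]; exact_mod_cast hδ0.le
  have hvd : (0 : WithTop Γ) ≤ v d := by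
    rw [hβ, hβval]
    exact_mod_cast (sub_pos.mpr hδ2γ).le
  -- compute the value at (c, d)
  have hcval : v (c ^ (4 * n) + ε * (c * d - ε ^ 2) ^ n + ε ^ 2 * d ^ (4 * n))
      = ((min ((4 * n) • δ) ((2:ℕ) • γ + (4 * n) • β) : Γ) : WithTop Γ) := by
    have hP : v (c ^ (4 * n)) = (((4 * n) • δ : Γ) : WithTop Γ) := by
      rw [v.map_pow, hc, ← WithTop.coe_nsmul]
    have hR : v (ε ^ 2 * d ^ (4 * n)) = (((2:ℕ) • γ + (4 * n) • β : Γ) : WithTop Γ) := by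
      rw [v.map_mul, hvε2, v.map_pow, hβ, ← WithTop.coe_nsmul, ← WithTop.coe_add]
    have hdist : v (c ^ (4 * n)) ≠ v (ε ^ 2 * d ^ (4 * n)) := by
      rw [hP, hR]
      exact_mod_cast fun h => hkey13 δ β (by exact_mod_cast h)
    rw [hcd, sub_self, zero_pow hn.ne', mul_zero, add_zero,
      v.map_add_of_distinct_val hdist, hP, hR, WithTop.coe_min]
  -- both components exceed g
  have hgood : (g : WithTop Γ)
      < v (c ^ (4 * n) + ε * (c * d - ε ^ 2) ^ n + ε ^ 2 * d ^ (4 * n)) := by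
    rw [hcval]
    have h2 : g < (2:ℕ) • γ + (4 * n) • β := by
      rw [hβval]
      have e : ((2:ℕ) • γ + (4 * n) • ((2:ℕ) • γ - δ) : Γ) = (8 * n + 2) • γ - (4 * n) • δ := by
        module
      rw [e]
      exact lt_sub_comm.mp hδup
    exact_mod_cast lt_min hδg h2
  -- contradiction with maximality
  have := hmax c d hvc hvd
  rw [heval c d, heval a b, hg] at this
  exact absurd (lt_of_lt_of_le hgood this) (lt_irrefl _)
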